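/- Let a, b, p be positive integers and let n₀ ≥ p be a positive integer such that every set A of permutations of {1,…,n₀} with |A| ≤ a satisfies d_p(A) ≥ b − 1. Let m = n₀ + 2⌈n₀/a⌉ − 1. Then every set A of permutations of {1,…,m} with |A| ≤ a + 2 satisfies d_{p+1}(A) ≥ b − 1. -/

import Mathlib

/-- `σ(≤P) = {s : σ s ≤ max_{j ∈ P} σ j}`. -/
def permLe {n : ℕ} (σ : Equiv.Perm (Fin n)) (P : Finset (Fin n)) : Finset (Fin n) :=
  Finset.univ.filter fun s => ∃ j ∈ P, σ s ≤ σ j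

/-- The `P`-dependent set `⟨A;P⟩ = ⋂_{σ ∈ A} σ(≤P)`. -/
def depSet {n : ℕ} (A : Finset (Equiv.Perm (Fin n))) (P : Finset (Fin n)) : Finset (Fin n) :=
  Finset.univ.filter fun s => ∀ σ ∈ A, ∃ j ∈ P, σ s ≤ σ j

/-- The `P`-dependency `d(A;P) = |⟨A;P⟩| - |P|`. -/
def dep {n : ℕ} (A : Finset (Equiv.Perm (Fin n))) (P : Finset (Fin n)) : ℕ :=
  (depSet A P).card - P.card

/-- The `p`-tuple dependency `d_p(A) = max {d(A;P) : |P| = p}`. -/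
def tupleDep {n : ℕ} (A : Finset (Equiv.Perm (Fin n))) (p : ℕ) : ℕ :=
  (Finset.powersetCard p (Finset.univ : Finset (Fin n))).sup (dep A)

open Finset

/-- Restriction of a permutation to an `n₀`-element set, as a permutation of `Fin n₀`
respecting the induced order comparisons. -/
lemma exists_restrict {m n₀ : ℕ} (σ : Equiv.Perm (Fin m)) (S : Finset (Fin m))
    (hS : S.card = n₀) :
    ∃ τ : Equiv.Perm (Fin n₀), ∀ u v : Fin n₀,
      (τ u ≤ τ v ↔ σ (S.orderIsoOfFin hS u) ≤ σ (S.orderIsoOfFin hS v)) := by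
  set e := S.orderIsoOfFin hS
  set g : Fin n₀ → Fin m := fun u => σ (e u) with hg
  have hginj : Function.Injective g := by
    intro u v huv
    have := σ.injective huv
    exact e.injective (Subtype.ext this)
  set T : Finset (Fin m) := Finset.univ.image g with hT
  have hTcard : T.card = n₀ := by
    rw [hT, Finset.card_image_of_injective _ hginj, Finset.card_univ, Fintype.card_fin]
  set f := T.orderIsoOfFin hTcard
  have hmem : ∀ u, g u ∈ T := fun u => Finset.mem_image_of_mem _ (Finset.mem_univ u)
  set τ0 : Fin n₀ → Fin n₀ := fun u => f.symm ⟨g u, hmem u⟩ with hτ0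
  have hinj : Function.Injective τ0 := by
    intro u v huv
    have := f.symm.injective huv
    exact hginj (congrArg Subtype.val this)
  refine ⟨Equiv.ofBijective τ0 (Finite.injective_iff_bijective.mp hinj), ?_⟩
  intro u v
  show τ0 u ≤ τ0 v ↔ _
  rw [hτ0]
  simp only [f.symm.le_iff_le, Subtype.mk_le_mk]
  exact Iff.rfl

/-- Core lemma: if the permutations outside a subfamily `B` of size `≤ a` all place every
element of an `n₀`-set `S` below `x`, then the `(p+1)`-tuple dependency is at least `b-1`. -/
lemma core_lemma {a b p n₀ m : ℕ} (hb : 2 ≤ b) (hpn : p ≤ n₀)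
    (H : ∀ A : Finset (Equiv.Perm (Fin n₀)), A.card ≤ a → b - 1 ≤ tupleDep A p)
    (A B : Finset (Equiv.Perm (Fin m))) (hB : B.card ≤ a)
    (x : Fin m) (S : Finset (Fin m)) (hS : S.card = n₀) (hxS : x ∉ S)
    (h2 : ∀ σ ∈ A, σ ∉ B → ∀ s ∈ S, σ s ≤ σ x) :
    b - 1 ≤ tupleDep A (p + 1) := by
  classical
  set e := S.orderIsoOfFin hS with he
  set R : Equiv.Perm (Fin m) → Equiv.Perm (Fin n₀) :=
    fun σ => Classical.choose (exists_restrict σ S hS) with hR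
  have hRspec : ∀ σ : Equiv.Perm (Fin m), ∀ u v : Fin n₀,
      (R σ u ≤ R σ v ↔ σ (e u) ≤ σ (e v)) :=
    fun σ => Classical.choose_spec (exists_restrict σ S hS)
  set A' : Finset (Equiv.Perm (Fin n₀)) := B.image R with hA'
  have hA'card : A'.card ≤ a := le_trans (Finset.card_image_le) hB
  have h1 : b - 1 ≤ tupleDep A' p := H A' hA'card
  -- extract an optimal P₀
  have hne : (Finset.powersetCard p (Finset.univ : Finset (Fin n₀))).Nonempty := by
    rw [Finset.powersetCard_nonempty, Finset.card_univ, Fintype.card_fin]; exact hpn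
  obtain ⟨P₀, hP₀mem, hP₀eq⟩ := Finset.exists_mem_eq_sup _ hne (dep A')
  have hP₀card : P₀.card = p := (Finset.mem_powersetCard.mp hP₀mem).2
  have hdep : b - 1 ≤ dep A' P₀ := by rw [tupleDep] at h1; omega
  have hDcard : p + (b - 1) ≤ (depSet A' P₀).card := by
    have := hdep; rw [dep, hP₀card] at this; omega
  -- transfer to Fin m
  set F : Fin n₀ → Fin m := fun u => (e u : Fin m) with hF
  have hFinj : Function.Injective F := fun u v huv => e.injective (Subtype.ext huv)
  have hFS : ∀ u, F u ∈ S := fun u => (e u).2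
  set P : Finset (Fin m) := insert x (P₀.image F) with hP
  have hxP : x ∉ P₀.image F := by
    intro hx
    obtain ⟨u, _, hu⟩ := Finset.mem_image.mp hx
    exact hxS (hu ▸ hFS u)
  have hPcard : P.card = p + 1 := by
    rw [hP, Finset.card_insert_of_notMem hxP,
      Finset.card_image_of_injective _ hFinj, hP₀card]
  have hsub : insert x ((depSet A' P₀).image F) ⊆ depSet A P := by
    intro s hs
    rcases Finset.mem_insert.mp hs with h | hs
    · rw [h, depSet, Finset.mem_filter]
      exact ⟨Finset.mem_univ _, fun σ _ => ⟨x, Finset.mem_insert_self _ _, le_refl _⟩⟩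
    · obtain ⟨u, hu, rfl⟩ := Finset.mem_image.mp hs
      rw [depSet, Finset.mem_filter] at hu ⊢
      refine ⟨Finset.mem_univ _, fun σ hσ => ?_⟩
      by_cases hσB : σ ∈ B
      · obtain ⟨j, hj, hle⟩ := hu.2 (R σ) (Finset.mem_image_of_mem R hσB)
        refine ⟨F j, ?_, (hRspec σ u j).mp hle⟩
        exact Finset.mem_insert_of_mem (Finset.mem_image_of_mem F hj)
      · exact ⟨x, Finset.mem_insert_self _ _, h2 σ hσ hσB (F u) (hFS u)⟩
  have hxD : x ∉ (depSet A' P₀).image F := by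
    intro hx
    obtain ⟨u, _, hu⟩ := Finset.mem_image.mp hx
    exact hxS (hu ▸ hFS u)
  have hcard2 : p + b ≤ (depSet A P).card := by
    have h3 := Finset.card_le_card hsub
    rw [Finset.card_insert_of_notMem hxD,
      Finset.card_image_of_injective _ hFinj] at h3
    omega
  have hfinal : b - 1 ≤ dep A P := by rw [dep, hPcard]; omega
  have hPmem : P ∈ Finset.powersetCard (p + 1) (Finset.univ : Finset (Fin m)) :=
    Finset.mem_powersetCard.mpr ⟨Finset.subset_univ _, hPcard⟩
  exact le_trans hfinal (Finset.le_sup hPmem)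

lemma card_filter_comp {m : ℕ} (σ : Equiv.Perm (Fin m)) (Q : Fin m → Prop) [DecidablePred Q] :
    (Finset.univ.filter fun s => Q (σ s)).card = (Finset.univ.filter Q).card := by
  rw [← Finset.card_image_of_injective (Finset.univ.filter fun s => Q (σ s)) σ.injective]
  congr 1
  ext v
  simp only [Finset.mem_image, Finset.mem_filter, Finset.mem_univ, true_and]
  constructor
  · rintro ⟨s, hQ, rfl⟩; exact hQ
  · intro hQ; exact ⟨σ.symm v, by simpa using hQ, by simp⟩

lemma main_aux (a b p n₀ m t : ℕ) (hb2 : 2 ≤ b) (hpn : p ≤ n₀) (hp : 0 < p)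
    (ht1 : 1 ≤ t) (hat : n₀ ≤ a * t) (hm : m = n₀ + 2 * t - 1)
    (H : ∀ A : Finset (Equiv.Perm (Fin n₀)), A.card ≤ a → b - 1 ≤ tupleDep A p)
    (A : Finset (Equiv.Perm (Fin m))) (hA : A.card ≤ a + 2) :
    b - 1 ≤ tupleDep A (p + 1) := by
  classical
  have hn₀pos : 0 < n₀ := lt_of_lt_of_le hp hpn
  have hmn : n₀ + 1 ≤ m := by omega
  have hmpos : 0 < m := by omega
  rcases Nat.lt_or_ge A.card (a + 2) with hcard | hcard
  · -- at most a+1 permutations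
    rcases A.eq_empty_or_nonempty with rfl | ⟨σ₁, hσ₁⟩
    · -- empty family
      set x : Fin m := ⟨0, hmpos⟩ with hx
      have hGood : n₀ ≤ (Finset.univ.erase x).card := by
        rw [Finset.card_erase_of_mem (Finset.mem_univ x), Finset.card_univ, Fintype.card_fin]
        omega
      obtain ⟨S, hSsub, hScard⟩ := Finset.exists_subset_card_eq hGood
      have hxS : x ∉ S := fun h => (Finset.mem_erase.mp (hSsub h)).1 rfl
      exact core_lemma hb2 hpn H ∅ ∅ (Nat.zero_le _) x S hScard hxS
        (fun σ hσ => absurd hσ (Finset.notMem_empty σ))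
    · -- nonempty, card ≤ a+1 : remove one permutation
      set x : Fin m := σ₁.symm ⟨m - 1, by omega⟩ with hx
      have htop : ∀ s : Fin m, σ₁ s ≤ σ₁ x := by
        intro s
        rw [hx, Equiv.apply_symm_apply]
        have := (σ₁ s).isLt
        exact Fin.mk_le_mk.mpr (by omega)
      have hGood : n₀ ≤ (Finset.univ.erase x).card := by
        rw [Finset.card_erase_of_mem (Finset.mem_univ x), Finset.card_univ, Fintype.card_fin]
        omega
      obtain ⟨S, hSsub, hScard⟩ := Finset.exists_subset_card_eq hGood
      have hxS : x ∉ S := fun h => (Finset.mem_erase.mp (hSsub h)).1 rfl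
      refine core_lemma hb2 hpn H A (A.erase σ₁) ?_ x S hScard hxS ?_
      · have := Finset.card_erase_of_mem hσ₁; omega
      · intro σ hσA hσB s _
        have : σ = σ₁ := by
          by_contra hne
          exact hσB (Finset.mem_erase.mpr ⟨hne, hσA⟩)
        rw [this]; exact htop s
  · -- exactly a+2 permutations : pigeonhole
    have hcard' : A.card = a + 2 := le_antisymm hA hcard
    have htopcard : ∀ σ : Equiv.Perm (Fin m),
        (Finset.univ.filter fun s : Fin m => m ≤ (σ s : ℕ) + t).card = t := by
      intro σ
      rw [card_filter_comp σ (fun v : Fin m => m ≤ (v : ℕ) + t)]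
      have heq : (Finset.univ.filter fun v : Fin m => m ≤ (v : ℕ) + t)
          = Finset.Ici (⟨m - t, by omega⟩ : Fin m) := by
        ext v
        simp only [Finset.mem_filter, Finset.mem_univ, true_and, Finset.mem_Ici, Fin.le_def]
        omega
      rw [heq, Fin.card_Ici]
      show m - (m - t) = t
      omega
    have hdc : ∑ s : Fin m, (A.filter fun σ => m ≤ (σ s : ℕ) + t).card
        = ∑ σ ∈ A, (Finset.univ.filter fun s : Fin m => m ≤ (σ s : ℕ) + t).card := by
      simp only [Finset.card_filter]
      exact Finset.sum_comm
    have hsum : m + 1 ≤ ∑ s : Fin m, (A.filter fun σ => m ≤ (σ s : ℕ) + t).card := by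
      rw [hdc]
      have heq : ∑ σ ∈ A, (Finset.univ.filter fun s : Fin m => m ≤ (σ s : ℕ) + t).card
          = (a + 2) * t := by
        rw [Finset.sum_congr rfl (fun σ _ => htopcard σ), Finset.sum_const, hcard',
          smul_eq_mul]
      rw [heq]
      have hexp : (a + 2) * t = a * t + 2 * t := by ring
      omega
    have hex : ∃ s : Fin m, 2 ≤ (A.filter fun σ => m ≤ (σ s : ℕ) + t).card := by
      by_contra hcon
      push_neg at hcon
      have hle : ∑ s : Fin m, (A.filter fun σ => m ≤ (σ s : ℕ) + t).card
          ≤ ∑ _s : Fin m, 1 :=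
        Finset.sum_le_sum (fun s _ => by have := hcon s; omega)
      simp only [Finset.sum_const, Finset.card_univ, Fintype.card_fin, smul_eq_mul,
        mul_one] at hle
      omega
    obtain ⟨x, hx2⟩ := hex
    obtain ⟨σ₁, hσ₁, σ₂, hσ₂, hne⟩ := Finset.one_lt_card.mp
      (by omega : 1 < (A.filter fun σ => m ≤ (σ x : ℕ) + t).card)
    have hσ₁A : σ₁ ∈ A := (Finset.mem_filter.mp hσ₁).1
    have hσ₂A : σ₂ ∈ A := (Finset.mem_filter.mp hσ₂).1
    have hσ₁x : m ≤ (σ₁ x : ℕ) + t := (Finset.mem_filter.mp hσ₁).2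
    have hσ₂x : m ≤ (σ₂ x : ℕ) + t := (Finset.mem_filter.mp hσ₂).2
    set G : Finset (Fin m) :=
      Finset.univ.filter fun s => s ≠ x ∧ σ₁ s ≤ σ₁ x ∧ σ₂ s ≤ σ₂ x with hG
    have hbad : ∀ σ : Equiv.Perm (Fin m), m ≤ (σ x : ℕ) + t →
        (Finset.univ.filter fun s : Fin m => ¬ σ s ≤ σ x).card ≤ t - 1 := by
      intro σ hσx
      rw [card_filter_comp σ (fun v : Fin m => ¬ v ≤ σ x)]
      have heq : (Finset.univ.filter fun v : Fin m => ¬ v ≤ σ x) = Finset.Ioi (σ x) := by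
        ext v
        simp only [Finset.mem_filter, Finset.mem_univ, true_and, Finset.mem_Ioi, not_le]
      rw [heq, Fin.card_Ioi]
      have := (σ x).isLt
      omega
    have hGcard : n₀ ≤ G.card := by
      have hsplit : Finset.univ ⊆ G ∪ {x} ∪ (Finset.univ.filter fun s => ¬ σ₁ s ≤ σ₁ x)
          ∪ (Finset.univ.filter fun s => ¬ σ₂ s ≤ σ₂ x) := by
        intro s _
        simp only [Finset.mem_union, Finset.mem_singleton, Finset.mem_filter,
          Finset.mem_univ, true_and, hG]
        by_cases h1 : s = x
        · tauto
        · by_cases h2 : σ₁ s ≤ σ₁ x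
          · by_cases h3 : σ₂ s ≤ σ₂ x
            · tauto
            · tauto
          · tauto
      have hcardle := Finset.card_le_card hsplit
      have h4 := Finset.card_union_le (G ∪ {x} ∪ (Finset.univ.filter fun s => ¬ σ₁ s ≤ σ₁ x))
        (Finset.univ.filter fun s => ¬ σ₂ s ≤ σ₂ x)
      have h5 := Finset.card_union_le (G ∪ {x})
        (Finset.univ.filter fun s => ¬ σ₁ s ≤ σ₁ x)
      have h6 := Finset.card_union_le G ({x} : Finset (Fin m))
      have h7 := hbad σ₁ hσ₁x
      have h8 := hbad σ₂ hσ₂x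
      rw [Finset.card_univ, Fintype.card_fin] at hcardle
      have h9 : ({x} : Finset (Fin m)).card = 1 := Finset.card_singleton x
      omega
    obtain ⟨S, hSsub, hScard⟩ := Finset.exists_subset_card_eq hGcard
    have hxS : x ∉ S := by
      intro h
      have := (Finset.mem_filter.mp (hSsub h)).2.1
      exact this rfl
    refine core_lemma hb2 hpn H A ((A.erase σ₁).erase σ₂) ?_ x S hScard hxS ?_
    · have e1 := Finset.card_erase_of_mem hσ₁A
      have hσ₂e : σ₂ ∈ A.erase σ₁ := Finset.mem_erase.mpr ⟨Ne.symm hne, hσ₂A⟩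
      have e2 := Finset.card_erase_of_mem hσ₂e
      omega
    · intro σ hσA hσB s hsS
      have hs := Finset.mem_filter.mp (hSsub hsS)
      have : σ = σ₁ ∨ σ = σ₂ := by
        by_contra hcon
        push_neg at hcon
        exact hσB (Finset.mem_erase.mpr ⟨hcon.2, Finset.mem_erase.mpr ⟨hcon.1, hσA⟩⟩)
      rcases this with rfl | rfl
      · exact hs.2.2.1
      · exact hs.2.2.2

theorem dependency_recurrence (a b p n₀ : ℕ) (ha : 0 < a) (hb : 0 < b) (hp : 0 < p)
    (hn₀ : p ≤ n₀)
    (H : ∀ A : Finset (Equiv.Perm (Fin n₀)), A.card ≤ a → b - 1 ≤ tupleDep A p) :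
    ∀ A : Finset (Equiv.Perm (Fin (n₀ + 2 * ((n₀ + a - 1) / a) - 1))),
      A.card ≤ a + 2 → b - 1 ≤ tupleDep A (p + 1) := by
  intro A hA
  rcases Nat.lt_or_ge b 2 with hb2 | hb2
  · have hz : b - 1 = 0 := by omega
    rw [hz]; exact Nat.zero_le _
  have hn₀pos : 0 < n₀ := lt_of_lt_of_le hp hn₀
  have hq : 0 < (n₀ + a - 1) / a := Nat.div_pos (by omega) ha
  have hat : n₀ ≤ a * ((n₀ + a - 1) / a) := by
    have h := Nat.div_add_mod (n₀ + a - 1) a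
    have h2 := Nat.mod_lt (n₀ + a - 1) ha
    obtain ⟨X, hX⟩ : ∃ X, a * ((n₀ + a - 1) / a) = X := ⟨_, rfl⟩
    rw [hX] at h ⊢
    omega
  exact main_aux a b p n₀ _ ((n₀ + a - 1) / a) hb2 hn₀ hp hq hat rfl H A hA
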